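/- arXiv:2307.12275 — 7 statements merged into one kernel-verified Lean document; each statement's English description precedes it below -/
import Mathlib

section
/- Let R = ℤ[A, A⁻¹] be the ring of Laurent polynomials and work in the polynomial ring R[T]. Define a sequence (x_n)_{n≥1} in R[T] by x_1 = T, x_2 = −A⁴T² − A², and x_n = −A⁸·x_{n−2} − A⁴·T·x_{n−1} for n ≥ 3. Then for every n ≥ 2, the element x_n − (−1)^{n−1}A^{4n−4}T^n lies in the R-submodule of R[T] spanned by {T^{2i} : 0 ≤ 2i ≤ n−2} when n is even, and in the R-submodule spanned by {T^{2i+1} : 0 ≤ 2i+1 ≤ n−2} when n is odd. -/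
/-- The Laurent monomial `A^k` in the ground ring `R = ℤ[A, A⁻¹]`. -/
noncomputable def Apow (k : ℤ) : LaurentPolynomial ℤ := LaurentPolynomial.T k

/-- The sequence `xₙ` in `R[T]`, `R = ℤ[A, A⁻¹]`, defined by `x₁ = T`,
`x₂ = −A⁴T² − A²` and `xₙ = −A⁸·x_{n−2} − A⁴·T·x_{n−1}` for `n ≥ 3`.
The polynomial variable `T` is `Polynomial.X`. -/
noncomputable def xseq : ℕ → Polynomial (LaurentPolynomial ℤ)
  | 0 => 0
  | 1 => Polynomial.X
  | 2 => -Polynomial.C (Apow 4) * Polynomial.X ^ 2 - Polynomial.C (Apow 2)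
  | (n + 3) => -Polynomial.C (Apow 8) * xseq (n + 1)
          - Polynomial.C (Apow 4) * Polynomial.X * xseq (n + 2)

/-- Powers of `X` of exponent at most `n - 2` and of the same parity as `n`. -/
def Sset (n : ℕ) : Set (Polynomial (LaurentPolynomial ℤ)) :=
  {p | ∃ j : ℕ, j ≤ n - 2 ∧ j % 2 = n % 2 ∧ p = Polynomial.X ^ j}

lemma Apow_add (a b : ℤ) : Apow (a + b) = Apow a * Apow b :=
  LaurentPolynomial.T_add a b

lemma xseq_key : ∀ n : ℕ, 2 ≤ n →
    xseq n - (-1) ^ (n - 1) * Polynomial.C (Apow (4 * (n : ℤ) - 4)) * Polynomial.X ^ n ∈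
      Submodule.span (LaurentPolynomial ℤ) (Sset n) := by
  intro n
  induction n using Nat.strong_induction_on with
  | _ n ih =>
    match n with
    | 0 => intro h; omega
    | 1 => intro h; omega
    | 2 =>
      intro _
      have h : xseq 2 - (-1) ^ (2 - 1) * Polynomial.C (Apow (4 * ((2:ℕ) : ℤ) - 4)) *
          Polynomial.X ^ 2
          = (-(Apow 2)) • ((Polynomial.X : Polynomial (LaurentPolynomial ℤ)) ^ 0) := by
        have : (4 * ((2:ℕ) : ℤ) - 4) = 4 := by norm_num
        rw [this]
        simp only [xseq, Polynomial.smul_eq_C_mul, map_neg]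
        ring
      rw [h]
      exact Submodule.smul_mem _ _ (Submodule.subset_span ⟨0, by omega, by omega, rfl⟩)
    | 3 =>
      intro _
      have h : xseq 3 - (-1) ^ (3 - 1) * Polynomial.C (Apow (4 * ((3:ℕ) : ℤ) - 4)) *
          Polynomial.X ^ 3
          = (Apow 6 - Apow 8) • ((Polynomial.X : Polynomial (LaurentPolynomial ℤ)) ^ 1) := by
        have h1 : (4 * ((3:ℕ) : ℤ) - 4) = 8 := by norm_num
        have h2 : (Apow 8 : LaurentPolynomial ℤ) = Apow 4 * Apow 4 := by
          rw [show (8:ℤ) = 4 + 4 by norm_num, Apow_add]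
        have h3 : (Apow 6 : LaurentPolynomial ℤ) = Apow 4 * Apow 2 := by
          rw [show (6:ℤ) = 4 + 2 by norm_num, Apow_add]
        rw [h1]
        show -Polynomial.C (Apow 8) * xseq 1 - Polynomial.C (Apow 4) * Polynomial.X * xseq 2
            - _ = _
        simp only [xseq, Polynomial.smul_eq_C_mul, map_sub, map_mul, map_neg, h2, h3]
        ring
      rw [h]
      exact Submodule.smul_mem _ _ (Submodule.subset_span ⟨1, by omega, by omega, rfl⟩)
    | (n + 4) =>
      intro _
      have h1 := ih (n + 2) (by omega) (by omega)
      have h2 := ih (n + 3) (by omega) (by omega)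
      set r1 := xseq (n + 2) - (-1) ^ (n + 2 - 1) *
        Polynomial.C (Apow (4 * ((n + 2 : ℕ) : ℤ) - 4)) * Polynomial.X ^ (n + 2) with hr1
      set r2 := xseq (n + 3) - (-1) ^ (n + 3 - 1) *
        Polynomial.C (Apow (4 * ((n + 3 : ℕ) : ℤ) - 4)) * Polynomial.X ^ (n + 3) with hr2
      have hA : Apow (4 * ((n + 4 : ℕ) : ℤ) - 4) =
          Apow 4 * Apow (4 * ((n + 3 : ℕ) : ℤ) - 4) := by
        rw [← Apow_add]; congr 1; push_cast; ring
      have hE : xseq (n + 4) - (-1) ^ (n + 4 - 1) *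
            Polynomial.C (Apow (4 * ((n + 4 : ℕ) : ℤ) - 4)) * Polynomial.X ^ (n + 4)
          = ((-1 : LaurentPolynomial ℤ) ^ (n + 1) *
              (-(Apow 8) * Apow (4 * ((n + 2 : ℕ) : ℤ) - 4))) •
                (Polynomial.X ^ (n + 2))
            + (-(Apow 8)) • r1 + (-(Apow 4)) • (Polynomial.X * r2) := by
        rw [hr1, hr2, hA]
        show -Polynomial.C (Apow 8) * xseq (n + 2)
            - Polynomial.C (Apow 4) * Polynomial.X * xseq (n + 3) - _ = _
        have e1 : n + 4 - 1 = n + 3 := by omega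
        have e2 : n + 3 - 1 = n + 2 := by omega
        have e3 : n + 2 - 1 = n + 1 := by omega
        rw [e1, e2, e3]
        simp only [Polynomial.smul_eq_C_mul, map_mul, map_neg, map_pow, map_one]
        ring
      rw [hE]
      refine add_mem (add_mem ?_ ?_) ?_
      · exact Submodule.smul_mem _ _
          (Submodule.subset_span ⟨n + 2, by omega, by omega, rfl⟩)
      · refine Submodule.smul_mem _ _ (Submodule.span_mono ?_ h1)
        rintro p ⟨j, hj, hp, rfl⟩
        exact ⟨j, by omega, by omega, rfl⟩
      · refine Submodule.smul_mem _ _ ?_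
        have hm := Submodule.mem_map_of_mem
          (f := LinearMap.mulLeft (LaurentPolynomial ℤ) (Polynomial.X :
            Polynomial (LaurentPolynomial ℤ))) h2
        rw [Submodule.map_span] at hm
        refine Submodule.span_le.mpr ?_ hm
        rintro p ⟨q, ⟨j, hj, hp, rfl⟩, rfl⟩
        refine Submodule.subset_span ⟨j + 1, by omega, by omega, ?_⟩
        simp [LinearMap.mulLeft_apply, pow_succ, mul_comm]

theorem xseq_leading_term (n : ℕ) (hn : 2 ≤ n) :
    (Even n →
      xseq n - (-1) ^ (n - 1) * Polynomial.C (Apow (4 * (n : ℤ) - 4)) * Polynomial.X ^ n ∈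
        Submodule.span (LaurentPolynomial ℤ)
          {p : Polynomial (LaurentPolynomial ℤ) |
            ∃ i : ℕ, 2 * i ≤ n - 2 ∧ p = Polynomial.X ^ (2 * i)}) ∧
    (Odd n →
      xseq n - (-1) ^ (n - 1) * Polynomial.C (Apow (4 * (n : ℤ) - 4)) * Polynomial.X ^ n ∈
        Submodule.span (LaurentPolynomial ℤ)
          {p : Polynomial (LaurentPolynomial ℤ) |
            ∃ i : ℕ, 2 * i + 1 ≤ n - 2 ∧ p = Polynomial.X ^ (2 * i + 1)}) := by
  have hkey := xseq_key n hn
  constructor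
  · intro he
    have hpar : n % 2 = 0 := Nat.even_iff.mp he
    have hset : Sset n = {p : Polynomial (LaurentPolynomial ℤ) |
        ∃ i : ℕ, 2 * i ≤ n - 2 ∧ p = Polynomial.X ^ (2 * i)} := by
      ext p
      constructor
      · rintro ⟨j, hj, hp, rfl⟩
        obtain ⟨i, rfl⟩ : ∃ i, j = 2 * i := ⟨j / 2, by omega⟩
        exact ⟨i, hj, rfl⟩
      · rintro ⟨i, hi, rfl⟩
        exact ⟨2 * i, hi, by omega, rfl⟩
    rw [← hset]
    exact hkey
  · intro ho
    have hpar : n % 2 = 1 := Nat.odd_iff.mp ho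
    have hset : Sset n = {p : Polynomial (LaurentPolynomial ℤ) |
        ∃ i : ℕ, 2 * i + 1 ≤ n - 2 ∧ p = Polynomial.X ^ (2 * i + 1)} := by
      ext p
      constructor
      · rintro ⟨j, hj, hp, rfl⟩
        obtain ⟨i, rfl⟩ : ∃ i, j = 2 * i + 1 := ⟨j / 2, by omega⟩
        exact ⟨i, hj, rfl⟩
      · rintro ⟨i, hi, rfl⟩
        exact ⟨2 * i + 1, hi, by omega, rfl⟩
    rw [← hset]
    exact hkey
end

section
/- Let n ≥ 1 and N ≥ 2. For every conjugation-invariant functional f on TL_{1,N} with values in an R-module M, the following holds: f(t_1^n σ_1) = f(t^n σ_1) + (u − u⁻¹)·Σ_{i=0}^{n−1} f(t^i t_1^{n−i}). -/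
/- Common setup: the mixed braid group `B_{1,n}`, the generalized Hecke algebra
of type B `H_{1,n}(u)`, and the generalized Temperley–Lieb algebra of type B
`TL_{1,n}`, following the paper's presentations. The generator `none` is `t`
and `some i` is `σ_{i+1}` for `i : Fin (n-1)`. -/

/-- Generators of the mixed braid group `B_{1,n}`: `none` is `t`,
`some i` is `σ_{i+1}`. -/
abbrev B1Gen (n : ℕ) := Option (Fin (n - 1))

/-- The generator `t` in the free group. -/
def tF (n : ℕ) : FreeGroup (B1Gen n) := FreeGroup.of none

/-- The generator `σ_{i+1}` in the free group. -/
def sF (n : ℕ) (i : Fin (n - 1)) : FreeGroup (B1Gen n) := FreeGroup.of (some i)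

/-- The relators of the mixed braid group `B_{1,n}`:
`σ₁tσ₁t = tσ₁tσ₁`; `tσ_i = σ_it` for `i > 1`; the braid relations
`σ_iσ_{i+1}σ_i = σ_{i+1}σ_iσ_{i+1}`; and `σ_iσ_j = σ_jσ_i` for `|i−j| > 1`. -/
def mixedRels (n : ℕ) : Set (FreeGroup (B1Gen n)) :=
  { r | (∃ i : Fin (n - 1), (i : ℕ) = 0 ∧
          r = sF n i * tF n * sF n i * tF n * (tF n * sF n i * tF n * sF n i)⁻¹) ∨
        (∃ i : Fin (n - 1), 0 < (i : ℕ) ∧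
          r = tF n * sF n i * (sF n i * tF n)⁻¹) ∨
        (∃ i j : Fin (n - 1), (j : ℕ) = (i : ℕ) + 1 ∧
          r = sF n i * sF n j * sF n i * (sF n j * sF n i * sF n j)⁻¹) ∨
        (∃ i j : Fin (n - 1), (i : ℕ) + 1 < (j : ℕ) ∧
          r = sF n i * sF n j * (sF n j * sF n i)⁻¹) }

/-- The mixed braid group `B_{1,n}`. -/
abbrev MixedBraidGroup (n : ℕ) := PresentedGroup (mixedRels n)

/-- The generator `t` of `B_{1,n}`. -/
def tB (n : ℕ) : MixedBraidGroup n := PresentedGroup.of none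

/-- The generator `σ_{i+1}` of `B_{1,n}`. -/
def sB (n : ℕ) (i : Fin (n - 1)) : MixedBraidGroup n := PresentedGroup.of (some i)

variable (R : Type) [CommRing R] (u : Rˣ)

/-- The quadratic Hecke relations `σ_i² = (u − u⁻¹)σ_i + 1` in the group
algebra `R[B_{1,n}]`. -/
inductive heckeRel (n : ℕ) :
    MonoidAlgebra R (MixedBraidGroup n) → MonoidAlgebra R (MixedBraidGroup n) → Prop where
  | quad (i : Fin (n - 1)) :
      heckeRel n
        (MonoidAlgebra.of R (MixedBraidGroup n) (sB n i) *
          MonoidAlgebra.of R (MixedBraidGroup n) (sB n i))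
        (((u : R) - ((u⁻¹ : Rˣ) : R)) • MonoidAlgebra.of R (MixedBraidGroup n) (sB n i) + 1)

/-- The generalized Hecke algebra of type B, `H_{1,n}(u)`. -/
abbrev Hecke (n : ℕ) := RingQuot (heckeRel R u n)

/-- The canonical (multiplicative) map `B_{1,n} → H_{1,n}(u)`. -/
noncomputable def toHecke (n : ℕ) : MixedBraidGroup n →* Hecke R u n :=
  (RingQuot.mkRingHom (heckeRel R u n)).toMonoidHom.comp
    (MonoidAlgebra.of R (MixedBraidGroup n))

/-- The Temperley–Lieb relations: the generators
`1 + u(σ_i + σ_{i+1}) + u²(σ_iσ_{i+1} + σ_{i+1}σ_i) + u³σ_iσ_{i+1}σ_i`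
of the defining ideal are set to `0`. -/
inductive tlRel (n : ℕ) : Hecke R u n → Hecke R u n → Prop where
  | cubic (i j : Fin (n - 1)) (hij : (j : ℕ) = (i : ℕ) + 1) :
      tlRel n
        (1 + (u : R) • (toHecke R u n (sB n i) + toHecke R u n (sB n j))
          + ((u : R) ^ 2) • (toHecke R u n (sB n i) * toHecke R u n (sB n j)
              + toHecke R u n (sB n j) * toHecke R u n (sB n i))
          + ((u : R) ^ 3) •
              (toHecke R u n (sB n i) * toHecke R u n (sB n j) * toHecke R u n (sB n i)))
        0

/-- The generalized Temperley–Lieb algebra of type B, `TL_{1,n}`. -/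
abbrev TL (n : ℕ) := RingQuot (tlRel R u n)

/-- The canonical (multiplicative) map `B_{1,n} → TL_{1,n}`. -/
noncomputable def toTL (n : ℕ) : MixedBraidGroup n →* TL R u n :=
  (RingQuot.mkRingHom (tlRel R u n)).toMonoidHom.comp (toHecke R u n)

/-- The element `t` of `TL_{1,n}`. -/
noncomputable def tT (n : ℕ) : TL R u n := toTL R u n (tB n)

/-- The element `σ₁` of `TL_{1,n}` (needs `2 ≤ n`). -/
noncomputable def σ₁T (n : ℕ) (hn : 2 ≤ n) : TL R u n :=
  toTL R u n (sB n ⟨0, by omega⟩)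

/-- The element `σ₁⁻¹` of `TL_{1,n}`, the image of the inverse braid
generator (needs `2 ≤ n`). -/
noncomputable def σ₁invT (n : ℕ) (hn : 2 ≤ n) : TL R u n :=
  toTL R u n (sB n ⟨0, by omega⟩)⁻¹

/-- The looping element `t₁ = σ₁ t σ₁` of `TL_{1,n}` (needs `2 ≤ n`). -/
noncomputable def t₁T (n : ℕ) (hn : 2 ≤ n) : TL R u n :=
  toTL R u n (sB n ⟨0, by omega⟩ * tB n * sB n ⟨0, by omega⟩)

lemma TL_sq (N : ℕ) (i : Fin (N - 1)) :
    toTL R u N (sB N i) * toTL R u N (sB N i)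
      = ((u : R) - ((u⁻¹ : Rˣ) : R)) • toTL R u N (sB N i) + 1 := by
  have eH : toHecke R u N (sB N i)
      = RingQuot.mkAlgHom R (heckeRel R u N) (MonoidAlgebra.of R (MixedBraidGroup N) (sB N i)) := by
    have e0 : toHecke R u N (sB N i)
        = RingQuot.mkRingHom (heckeRel R u N) (MonoidAlgebra.of R (MixedBraidGroup N) (sB N i)) := rfl
    rw [e0, ← RingQuot.mkAlgHom_coe R]; rfl
  have h1 : toHecke R u N (sB N i) * toHecke R u N (sB N i)
      = ((u : R) - ((u⁻¹ : Rˣ) : R)) • toHecke R u N (sB N i) + 1 := by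
    have h := RingQuot.mkAlgHom_rel R (heckeRel.quad (R := R) (u := u) (n := N) i)
    rw [map_mul, map_add, map_smul, map_one] at h
    rw [eH]; exact h
  have eT : toTL R u N (sB N i)
      = RingQuot.mkAlgHom R (tlRel R u N) (toHecke R u N (sB N i)) := by
    have e0 : toTL R u N (sB N i)
        = RingQuot.mkRingHom (tlRel R u N) (toHecke R u N (sB N i)) := rfl
    rw [e0, ← RingQuot.mkAlgHom_coe R]; rfl
  have h2 := congrArg (RingQuot.mkAlgHom R (tlRel R u N)) h1
  rw [map_mul, map_add, map_smul, map_one] at h2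
  rw [eT]; exact h2

/-- Lemma 1(i) of the paper: for every conjugation-invariant functional `f` on
`TL_{1,N}`, `f(t₁ⁿσ₁) = f(tⁿσ₁) + (u − u⁻¹)·Σ_{i=0}^{n−1} f(tⁱ t₁^{n−i})`. -/
theorem lemma1_i (M : Type) [AddCommGroup M] [Module R M]
    (N n : ℕ) (hN : 2 ≤ N) (hn : 1 ≤ n)
    (f : TL R u N →ₗ[R] M) (hf : ∀ a b : TL R u N, f (a * b) = f (b * a)) :
    f (t₁T R u N hN ^ n * σ₁T R u N hN)
      = f (tT R u N ^ n * σ₁T R u N hN)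
        + ((u : R) - ((u⁻¹ : Rˣ) : R)) •
            ∑ i ∈ Finset.range n, f (tT R u N ^ i * t₁T R u N hN ^ (n - i)) := by
  set c : R := (u : R) - ((u⁻¹ : Rˣ) : R) with hc
  set s : TL R u N := σ₁T R u N hN with hs
  set t : TL R u N := tT R u N with ht
  set t1 : TL R u N := t₁T R u N hN with ht1def
  have hsq : s * s = c • s + 1 := TL_sq R u N ⟨0, by omega⟩
  have ht1 : t1 = s * t * s := by
    rw [ht1def, t₁T, map_mul, map_mul]; rfl
  have hts : t1 * s = c • t1 + s * t := by
    rw [ht1, mul_assoc, hsq, mul_add, mul_one, mul_smul_comm]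
  have key : ∀ k j : ℕ, f (t ^ j * t1 ^ k * s)
      = f (t ^ (j + k) * s)
        + c • ∑ i ∈ Finset.range k, f (t ^ (j + i) * t1 ^ (k - i)) := by
    intro k
    induction k with
    | zero => intro j; simp
    | succ k ih =>
      intro j
      have step : t ^ j * t1 ^ (k + 1) * s
          = c • (t ^ j * t1 ^ (k + 1)) + (t ^ j * t1 ^ k * s) * t := by
        rw [pow_succ, ← mul_assoc, mul_assoc (t ^ j * t1 ^ k), hts, mul_add,
          mul_smul_comm, ← mul_assoc, mul_assoc (t ^ j * t1 ^ k) s t,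
          ← mul_assoc (t ^ j * t1 ^ k) s t]
      have h1 : f ((t ^ j * t1 ^ k * s) * t) = f (t ^ (j + 1) * t1 ^ k * s) := by
        rw [hf, ← mul_assoc, ← mul_assoc, ← pow_succ']
      rw [step, map_add, map_smul, h1, ih (j + 1)]
      have hsum : ∑ i ∈ Finset.range (k + 1), f (t ^ (j + i) * t1 ^ (k + 1 - i))
          = (∑ i ∈ Finset.range k, f (t ^ (j + 1 + i) * t1 ^ (k - i)))
            + f (t ^ j * t1 ^ (k + 1)) := by
        rw [Finset.sum_range_succ']
        congr 1
        refine Finset.sum_congr rfl fun i _ => ?_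
        rw [show j + (i + 1) = j + 1 + i by omega, Nat.succ_sub_succ]
      rw [hsum]
      have hjk : j + 1 + k = j + (k + 1) := by omega
      rw [hjk, smul_add]
      abel
  have := key n 0
  simpa using this
end

section
/- Let n ≥ 1 and N ≥ 2. For every conjugation-invariant functional f on TL_{1,N} with values in an R-module M, the following holds: f(t_1^n σ_1^{−1}) = f(t^n σ_1) + (u − u⁻¹)·Σ_{i=1}^{n−1} f(t^i t_1^{n−i}). -/
variable (R : Type) [CommRing R] (u : Rˣ)

/-- The map `toTL` factors through the two `mkAlgHom`s. -/
lemma toTL_eq_mkAlgHom (n : ℕ) (g : MixedBraidGroup n) :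
    toTL R u n g
      = RingQuot.mkAlgHom R (tlRel R u n)
          (RingQuot.mkAlgHom R (heckeRel R u n)
            (MonoidAlgebra.of R (MixedBraidGroup n) g)) := by
  have h1 : (RingQuot.mkAlgHom R (heckeRel R u n))
        (MonoidAlgebra.of R (MixedBraidGroup n) g)
      = RingQuot.mkRingHom (heckeRel R u n) (MonoidAlgebra.of R (MixedBraidGroup n) g) :=
    RingHom.congr_fun (RingQuot.mkAlgHom_coe R (heckeRel R u n)) _
  rw [h1]
  exact (RingHom.congr_fun (RingQuot.mkAlgHom_coe R (tlRel R u n)) _).symm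

/-- The quadratic Hecke relation in `TL`. -/
lemma quad_TL (N : ℕ) (hN : 2 ≤ N) :
    σ₁T R u N hN * σ₁T R u N hN
      = ((u : R) - ((u⁻¹ : Rˣ) : R)) • σ₁T R u N hN + 1 := by
  have h1 := RingQuot.mkAlgHom_rel R (s := heckeRel R u N)
    (heckeRel.quad ⟨0, by omega⟩)
  rw [map_mul, map_add, map_smul, map_one] at h1
  have h2 := congrArg (RingQuot.mkAlgHom R (tlRel R u N)) h1
  rw [map_mul, map_add, map_smul, map_one] at h2
  rw [σ₁T, toTL_eq_mkAlgHom]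
  exact h2

/-- Lemma 1(ii) of the paper: for every conjugation-invariant functional `f` on
`TL_{1,N}`, `f(t₁ⁿσ₁⁻¹) = f(tⁿσ₁) + (u − u⁻¹)·Σ_{i=1}^{n−1} f(tⁱ t₁^{n−i})`. -/
theorem lemma1_ii (M : Type) [AddCommGroup M] [Module R M]
    (N n : ℕ) (hN : 2 ≤ N) (hn : 1 ≤ n)
    (f : TL R u N →ₗ[R] M) (hf : ∀ a b : TL R u N, f (a * b) = f (b * a)) :
    f (t₁T R u N hN ^ n * σ₁invT R u N hN)
      = f (tT R u N ^ n * σ₁T R u N hN)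
        + ((u : R) - ((u⁻¹ : Rˣ) : R)) •
            ∑ i ∈ Finset.Ico 1 n, f (tT R u N ^ i * t₁T R u N hN ^ (n - i)) := by
  set δ : R := (u : R) - ((u⁻¹ : Rˣ) : R) with hδ
  set σ : TL R u N := σ₁T R u N hN with hσ
  set σi : TL R u N := σ₁invT R u N hN with hσi
  set τ : TL R u N := tT R u N with hτ
  set τ1 : TL R u N := t₁T R u N hN with hτ1
  -- basic multiplicative facts
  have hσσi : σ * σi = 1 := by
    rw [hσ, hσi, σ₁T, σ₁invT, ← map_mul, mul_inv_cancel, map_one]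
  have hσiσ : σi * σ = 1 := by
    rw [hσ, hσi, σ₁T, σ₁invT, ← map_mul, inv_mul_cancel, map_one]
  have hquad : σ * σ = δ • σ + 1 := quad_TL R u N hN
  have ht1 : τ1 = σ * τ * σ := by
    rw [hτ1, hσ, hτ, t₁T, σ₁T, tT, map_mul, map_mul]
  have hτ1σi : τ1 * σi = σ * τ := by
    rw [ht1, mul_assoc, hσσi, mul_one]
  have hσeq : σ = σi + δ • (1 : TL R u N) := by
    have h1 : σi * (σ * σ) = σ := by rw [← mul_assoc, hσiσ, one_mul]
    rw [hquad, mul_add, mul_one, mul_smul_comm, hσiσ] at h1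
    rw [← h1]
    abel
  -- splitting f (σ * x) using σ = σ⁻¹ + δ
  have hsplit : ∀ x : TL R u N, f (σ * x) = f (σi * x) + δ • f x := by
    intro x
    rw [hσeq, add_mul, smul_mul_assoc, one_mul, map_add, map_smul]
  -- the key conjugation step
  have hstep : ∀ k m : ℕ,
      f (σi * (τ ^ k * τ1 ^ (m + 1))) = f (σ * (τ ^ (k + 1) * τ1 ^ m)) := by
    intro k m
    rw [hf]
    have e1 : τ ^ k * τ1 ^ (m + 1) * σi = τ ^ k * τ1 ^ m * σ * τ := by
      rw [pow_succ]
      simp only [mul_assoc, hτ1σi]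
    rw [e1, hf, ← mul_assoc, ← mul_assoc, ← pow_succ', hf]
  -- main downward induction
  have main : ∀ d k : ℕ, k + d = n →
      f (σ * (τ ^ k * τ1 ^ d))
        = f (τ ^ n * σ)
          + δ • ∑ i ∈ Finset.Ico k n, f (τ ^ i * τ1 ^ (n - i)) := by
    intro d
    induction d with
    | zero =>
      intro k hk
      have hk' : k = n := by omega
      subst hk'
      rw [Finset.Ico_self, Finset.sum_empty, smul_zero, add_zero, pow_zero, mul_one, hf]
    | succ d ih =>
      intro k hk
      have hkn : k < n := by omega
      have hnk : n - k = d + 1 := by omega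
      rw [hsplit, hstep, ih (k + 1) (by omega),
        Finset.sum_eq_sum_Ico_succ_bot hkn, hnk, smul_add]
      abel
  -- conclude
  have hL : f (τ1 ^ n * σi) = f (σ * (τ ^ 1 * τ1 ^ (n - 1))) := by
    rw [hf, ← hstep 0 (n - 1)]
    congr 2
    rw [pow_zero, one_mul]
    congr 1
    omega
  rw [hL, main (n - 1) 1 (by omega)]
end

section
/- Let f be a conjugation-invariant functional on TL_{1,2} with values in an R-module M, let n ≥ 1, and set s_n = f(t^n). Suppose the equation s_n = −((1+u²)/u)·u^{4n+2}·f(t_1^n σ_1) holds (the equation coming from a positive braid band move on t^n). Then the equation s_n = −((1+u²)/u)·u^{4n−2}·f(t_1^n σ_1^{−1}) (coming from a negative braid band move on t^n) holds if and only if (u⁴ − 1)·(s_n − u^{4n}·f(t_1^n)) = 0 in M. -/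
variable (R : Type) [CommRing R] (u : Rˣ)

-- Auxiliary: `mkAlgHom` agrees with `mkRingHom` pointwise.
lemma mkAlgHom_eq_mkRingHom {A : Type*} [Semiring A] [Algebra R A]
    (rel : A → A → Prop) (x : A) :
    RingQuot.mkAlgHom R rel x = RingQuot.mkRingHom rel x := by
  rw [← RingQuot.mkAlgHom_coe R rel]; rfl

/-- The quadratic Hecke relation holds in `TL_{1,2}`. -/
lemma quad_in_TL :
    σ₁T R u 2 le_rfl * σ₁T R u 2 le_rfl
      = ((u : R) - ((u⁻¹ : Rˣ) : R)) • σ₁T R u 2 le_rfl + 1 := by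
  have h := RingQuot.mkAlgHom_rel R
    (heckeRel.quad (R := R) (u := u) (n := 2) ⟨0, by omega⟩)
  simp only [map_mul, map_add, map_one, map_smul, mkAlgHom_eq_mkRingHom] at h
  have h2 := congrArg (RingQuot.mkAlgHom R (tlRel R u 2)) h
  simp only [map_mul, map_add, map_one, map_smul, mkAlgHom_eq_mkRingHom] at h2
  exact h2

/-- Right multiplication by `b - c • 1`. -/
lemma mul_sub_smul_one (a b : TL R u 2) (c : R) :
    a * (b - c • 1) = a * b - c • a :=
  (mul_sub a b (c • 1)).trans
    (congrArg (fun z => a * b - z)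
      ((mul_smul_comm c a 1).trans (congrArg _ (mul_one a))))

/-- `σ₁⁻¹ = σ₁ - (u - u⁻¹)` in `TL_{1,2}`. -/
lemma sigma_inv_eq :
    σ₁invT R u 2 le_rfl
      = σ₁T R u 2 le_rfl - ((u : R) - ((u⁻¹ : Rˣ) : R)) • (1 : TL R u 2) := by
  have h1 : σ₁invT R u 2 le_rfl * σ₁T R u 2 le_rfl = 1 := by
    unfold σ₁invT σ₁T
    rw [← map_mul, inv_mul_cancel, map_one]
  have hone : σ₁T R u 2 le_rfl * σ₁T R u 2 le_rfl
      - ((u : R) - ((u⁻¹ : Rˣ) : R)) • σ₁T R u 2 le_rfl = 1 := by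
    rw [quad_in_TL R u]
    exact add_sub_cancel_left
      (((u : R) - ((u⁻¹ : Rˣ) : R)) • σ₁T R u 2 le_rfl) 1
  calc σ₁invT R u 2 le_rfl
      = σ₁invT R u 2 le_rfl * (σ₁T R u 2 le_rfl * σ₁T R u 2 le_rfl
          - ((u : R) - ((u⁻¹ : Rˣ) : R)) • σ₁T R u 2 le_rfl) := by
        rw [hone, mul_one]
    _ = σ₁invT R u 2 le_rfl * (σ₁T R u 2 le_rfl * σ₁T R u 2 le_rfl)
          - σ₁invT R u 2 le_rfl * (((u : R) - ((u⁻¹ : Rˣ) : R)) • σ₁T R u 2 le_rfl) :=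
        mul_sub (σ₁invT R u 2 le_rfl) (σ₁T R u 2 le_rfl * σ₁T R u 2 le_rfl)
          (((u : R) - ((u⁻¹ : Rˣ) : R)) • σ₁T R u 2 le_rfl)
    _ = (σ₁invT R u 2 le_rfl * σ₁T R u 2 le_rfl) * σ₁T R u 2 le_rfl
          - ((u : R) - ((u⁻¹ : Rˣ) : R)) •
            (σ₁invT R u 2 le_rfl * σ₁T R u 2 le_rfl) :=
        congrArg₂ (· - ·)
          (mul_assoc (σ₁invT R u 2 le_rfl) (σ₁T R u 2 le_rfl) (σ₁T R u 2 le_rfl)).symm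
          (mul_smul_comm ((u : R) - ((u⁻¹ : Rˣ) : R)) (σ₁invT R u 2 le_rfl)
            (σ₁T R u 2 le_rfl))
    _ = σ₁T R u 2 le_rfl - ((u : R) - ((u⁻¹ : Rˣ) : R)) • (1 : TL R u 2) := by
        rw [h1, one_mul]

/-- Equation (eqtr) of the paper: given the positive braid-band-move equation
`sₙ = −((1+u²)/u)·u^{4n+2}·f(t₁ⁿσ₁)` for `sₙ = f(tⁿ)`, the negative one
`sₙ = −((1+u²)/u)·u^{4n−2}·f(t₁ⁿσ₁⁻¹)` holds iff
`(u⁴ − 1)·(sₙ − u^{4n}·f(t₁ⁿ)) = 0` in `M`. -/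
theorem bbm_equations_equivalence (M : Type) [AddCommGroup M] [Module R M]
    (n : ℕ) (hn : 1 ≤ n)
    (f : TL R u 2 →ₗ[R] M) (hf : ∀ a b : TL R u 2, f (a * b) = f (b * a))
    (hpos : f (tT R u 2 ^ n)
      = (-((1 + (u : R) ^ 2) * ((u⁻¹ : Rˣ) : R)) * (u : R) ^ (4 * n + 2)) •
          f (t₁T R u 2 le_rfl ^ n * σ₁T R u 2 le_rfl)) :
    (f (tT R u 2 ^ n)
      = (-((1 + (u : R) ^ 2) * ((u⁻¹ : Rˣ) : R)) * (u : R) ^ (4 * n - 2)) •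
          f (t₁T R u 2 le_rfl ^ n * σ₁invT R u 2 le_rfl))
    ↔ ((u : R) ^ 4 - 1) • (f (tT R u 2 ^ n) - (u : R) ^ (4 * n) • f (t₁T R u 2 le_rfl ^ n))
        = 0 := by
  have hu : (u : R) * ((u⁻¹ : Rˣ) : R) = 1 := by exact_mod_cast u.mul_inv
  have hvu : ((u⁻¹ : Rˣ) : R) * (u : R) = 1 := by rw [mul_comm]; exact hu
  set v : R := ((u⁻¹ : Rˣ) : R) with hv
  set s : M := f (tT R u 2 ^ n) with hs
  set A : M := f (t₁T R u 2 le_rfl ^ n * σ₁T R u 2 le_rfl) with hA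
  set B : M := f (t₁T R u 2 le_rfl ^ n) with hB
  set k : R := -((1 + (u : R) ^ 2) * v) * (u : R) ^ (4 * n - 2) with hk
  have e1 : t₁T R u 2 le_rfl ^ n * σ₁invT R u 2 le_rfl
      = t₁T R u 2 le_rfl ^ n * σ₁T R u 2 le_rfl
        - ((u : R) - v) • t₁T R u 2 le_rfl ^ n := by
    rw [sigma_inv_eq R u]
    exact mul_sub_smul_one R u (t₁T R u 2 le_rfl ^ n) (σ₁T R u 2 le_rfl)
      ((u : R) - ((u⁻¹ : Rˣ) : R))
  have hfneg : f (t₁T R u 2 le_rfl ^ n * σ₁invT R u 2 le_rfl)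
      = A - ((u : R) - v) • B :=
    (congrArg f e1).trans
      ((map_sub f (t₁T R u 2 le_rfl ^ n * σ₁T R u 2 le_rfl)
          (((u : R) - v) • t₁T R u 2 le_rfl ^ n)).trans
        (congrArg (fun z => A - z)
          (map_smul f ((u : R) - v) (t₁T R u 2 le_rfl ^ n))))
  have hsc : -((1 + (u : R) ^ 2) * v) * (u : R) ^ (4 * n + 2)
      = (u : R) ^ 4 * k := by
    rw [hk, show (4:ℕ) * n + 2 = 4 + (4 * n - 2) by omega, pow_add]
    ring
  have hpos' : s = (u : R) ^ 4 • (k • A) := by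
    rw [hpos, hsc, ← smul_smul]
  have hkey : (u : R) ^ 4 * (k * ((u : R) - v))
      = -(((u : R) ^ 4 - 1) * (u : R) ^ (4 * n)) := by
    rw [hk]
    generalize hgen : 4 * n - 2 = m
    rw [show 4 * n = m + 2 by omega, pow_add]
    linear_combination
      ((-((u : R) ^ m)) *
        ((u : R) ^ 6 - (u : R) ^ 2 - ((u : R) ^ 3 + (u : R) ^ 5) * v)) * hu
  have hcancel : ∀ x y : M, (u : R) ^ 4 • x = (u : R) ^ 4 • y → x = y := by
    intro x y h
    have h2 := congrArg (fun z : M => v ^ 4 • z) h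
    simpa [smul_smul, ← mul_pow, hvu] using h2
  have key : (u : R) ^ 4 • (k • (A - ((u : R) - v) • B))
      = s + (((u : R) ^ 4 - 1) * (u : R) ^ (4 * n)) • B := by
    rw [smul_sub k A (((u : R) - v) • B), smul_sub ((u : R) ^ 4) (k • A),
      ← hpos', smul_smul k ((u : R) - v) B,
      smul_smul ((u : R) ^ 4) (k * ((u : R) - v)) B, hkey, neg_smul,
      sub_neg_eq_add]
  constructor
  · intro h
    rw [hfneg] at h
    have h4 : (u : R) ^ 4 • s
        = s + (((u : R) ^ 4 - 1) * (u : R) ^ (4 * n)) • B := by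
      rw [← key, ← h]
    rw [smul_sub, sub_eq_zero, sub_smul, one_smul, smul_smul, sub_eq_iff_eq_add']
    exact h4
  · intro h
    rw [smul_sub, sub_eq_zero, sub_smul, one_smul, smul_smul,
      sub_eq_iff_eq_add'] at h
    rw [hfneg]
    exact hcancel _ _ (by rw [key, ← h])
end

section
/- Let f be a conjugation-invariant functional on TL_{1,2} with values in an R-module M satisfying the Markov-rule instance u(1+u²)·f(tσ_1) = −f(t). Then u²(1+u²)·f(t_1) = (u⁴ + 1)·f(t). -/
variable (R : Type) [CommRing R] (u : Rˣ)

/-- The computation `tr(t₁) = ((u⁴+1)/(u²(1+u²)))·s₁` from Section 3 of the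
paper: if `u(1+u²)·f(tσ₁) = −f(t)` then `u²(1+u²)·f(t₁) = (u⁴+1)·f(t)`. -/
theorem trace_of_t1 (M : Type) [AddCommGroup M] [Module R M]
    (f : TL R u 2 →ₗ[R] M) (hf : ∀ a b : TL R u 2, f (a * b) = f (b * a))
    (hmarkov : ((u : R) * (1 + (u : R) ^ 2)) • f (tT R u 2 * σ₁T R u 2 le_rfl)
        = -f (tT R u 2)) :
    ((u : R) ^ 2 * (1 + (u : R) ^ 2)) • f (t₁T R u 2 le_rfl)
      = ((u : R) ^ 4 + 1) • f (tT R u 2) := by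
  set σ := σ₁T R u 2 le_rfl with hσ
  set t := tT R u 2 with ht
  set c : R := (u : R) - ((u⁻¹ : Rˣ) : R) with hc
  have hσdef : σ = RingQuot.mkAlgHom R (tlRel R u 2)
      (RingQuot.mkAlgHom R (heckeRel R u 2)
        (MonoidAlgebra.of R (MixedBraidGroup 2) (sB 2 ⟨0, by omega⟩))) := by
    rw [hσ]; unfold σ₁T toTL toHecke
    rw [← RingQuot.mkAlgHom_coe R (tlRel R u 2), ← RingQuot.mkAlgHom_coe R (heckeRel R u 2)]
    rfl
  have hquad : σ * σ = c • σ + 1 := by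
    rw [hσdef, ← map_mul, ← map_mul,
      RingQuot.mkAlgHom_rel R (heckeRel.quad (R := R) (u := u) (n := 2) ⟨0, by omega⟩),
      map_add, map_add, map_one, map_one, map_smul, map_smul]
  have ht1 : t₁T R u 2 le_rfl = σ * t * σ := by
    simp [t₁T, σ₁T, tT, ht, hσ, map_mul]
  have key : f (t₁T R u 2 le_rfl) = c • f (t * σ) + f t := by
    rw [ht1, mul_assoc, hf σ (t * σ), mul_assoc, hquad, mul_add, mul_one, mul_smul_comm,
      map_add, map_smul]
  rw [key, smul_add, smul_smul]
  have hcc : (u : R) ^ 2 * (1 + (u : R) ^ 2) * c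
      = ((u : R) ^ 2 - 1) * ((u : R) * (1 + (u : R) ^ 2)) := by
    have hu : (u : R) * ((u⁻¹ : Rˣ) : R) = 1 := u.mul_inv
    rw [hc]
    linear_combination (-(u : R) - (u : R) ^ 3) * hu
  rw [hcc, mul_smul, hmarkov, smul_neg, ← neg_smul, ← add_smul]
  congr 1
  ring
end

section
/- Take R = ℚ(u), the field of rational functions over ℚ in the variable u. Let f be a conjugation-invariant functional on TL_{1,2} with values in a ℚ(u)-vector space M satisfying f(tσ_1) = (−1/(u(1+u²)))·f(t). If moreover f(t) = u⁴·f(t_1), then f(t) = 0. -/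
variable (R : Type) [CommRing R] (u : Rˣ)

/-- The variable `u`, as a unit of the field `ℚ(u) = RatFunc ℚ`. -/
noncomputable def uX : (RatFunc ℚ)ˣ := Units.mk0 RatFunc.X RatFunc.X_ne_zero

lemma toHecke_sq (n : ℕ) (i : Fin (n - 1)) :
    toHecke R u n (sB n i) * toHecke R u n (sB n i)
      = ((u : R) - ((u⁻¹ : Rˣ) : R)) • toHecke R u n (sB n i) + 1 := by
  have h := RingQuot.mkAlgHom_rel R (s := heckeRel R u n) (heckeRel.quad i)
  simp only [map_mul, map_add, map_one, map_smul] at h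
  have e : ∀ x, RingQuot.mkAlgHom R (heckeRel R u n) x
      = RingQuot.mkRingHom (heckeRel R u n) x := fun x =>
    RingHom.congr_fun (RingQuot.mkAlgHom_coe R (heckeRel R u n)) x
  simp only [e] at h
  simpa [toHecke] using h

lemma toTL_sq (n : ℕ) (i : Fin (n - 1)) :
    toTL R u n (sB n i) * toTL R u n (sB n i)
      = ((u : R) - ((u⁻¹ : Rˣ) : R)) • toTL R u n (sB n i) + 1 := by
  have h := congrArg (RingQuot.mkAlgHom R (tlRel R u n)) (toHecke_sq R u n i)
  simp only [map_mul, map_add, map_one, map_smul] at h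
  have e : ∀ x, RingQuot.mkAlgHom R (tlRel R u n) x
      = RingQuot.mkRingHom (tlRel R u n) x := fun x =>
    RingHom.congr_fun (RingQuot.mkAlgHom_coe R (tlRel R u n)) x
  simp only [e] at h
  simpa [toTL] using h

lemma one_add_X_sq_ne : (1 + RatFunc.X ^ 2 : RatFunc ℚ) ≠ 0 := by
  have : (1 + RatFunc.X ^ 2 : RatFunc ℚ)
      = algebraMap (Polynomial ℚ) (RatFunc ℚ) (1 + Polynomial.X ^ 2) := by
    simp [map_add, map_pow, RatFunc.algebraMap_X]
  rw [this]
  apply RatFunc.algebraMap_ne_zero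
  intro h
  have := congrArg (fun p => Polynomial.coeff p 2) h
  simp [Polynomial.coeff_one] at this

lemma one_sub_X_six_ne : (1 - RatFunc.X ^ 6 : RatFunc ℚ) ≠ 0 := by
  have : (1 - RatFunc.X ^ 6 : RatFunc ℚ)
      = algebraMap (Polynomial ℚ) (RatFunc ℚ) (1 - Polynomial.X ^ 6) := by
    simp [map_sub, map_pow, RatFunc.algebraMap_X]
  rw [this]
  apply RatFunc.algebraMap_ne_zero
  intro h
  have := congrArg (fun p => Polynomial.coeff p 6) h
  simp [Polynomial.coeff_one] at this


/-- Over `R = ℚ(u)`, if the conjugation-invariant functional `f` on `TL_{1,2}`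
satisfies the Markov rule `f(tσ₁) = (−1/(u(1+u²)))·f(t)` and moreover
`f(t) = u⁴·f(t₁)`, then `f(t) = 0`: the positive and negative braid band move
equations on `t` are not simultaneously satisfiable nontrivially. -/
theorem bbm_not_equivalent (M : Type) [AddCommGroup M] [Module (RatFunc ℚ) M]
    (f : TL (RatFunc ℚ) uX 2 →ₗ[RatFunc ℚ] M)
    (hf : ∀ a b : TL (RatFunc ℚ) uX 2, f (a * b) = f (b * a))
    (hmarkov : f (tT (RatFunc ℚ) uX 2 * σ₁T (RatFunc ℚ) uX 2 le_rfl)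
      = ((-1 : RatFunc ℚ) / (RatFunc.X * (1 + RatFunc.X ^ 2))) • f (tT (RatFunc ℚ) uX 2))
    (heq : f (tT (RatFunc ℚ) uX 2)
      = (RatFunc.X ^ 4 : RatFunc ℚ) • f (t₁T (RatFunc ℚ) uX 2 le_rfl)) :
    f (tT (RatFunc ℚ) uX 2) = 0 := by
  set X : RatFunc ℚ := RatFunc.X with hX
  set T : TL (RatFunc ℚ) uX 2 := tT (RatFunc ℚ) uX 2 with hT
  set S : TL (RatFunc ℚ) uX 2 := σ₁T (RatFunc ℚ) uX 2 le_rfl with hS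
  have hXne : X ≠ 0 := RatFunc.X_ne_zero
  set c : RatFunc ℚ := X - X⁻¹ with hc
  set m : RatFunc ℚ := (-1 : RatFunc ℚ) / (X * (1 + X ^ 2)) with hm
  have hu : ((uX : (RatFunc ℚ)ˣ) : RatFunc ℚ) = X := rfl
  have hui : ((uX⁻¹ : (RatFunc ℚ)ˣ) : RatFunc ℚ) = X⁻¹ := by
    rw [Units.val_inv_eq_inv_val, hu]
  have hsq : S * S = c • S + 1 := by
    have := toTL_sq (RatFunc ℚ) uX 2 ⟨0, by omega⟩
    rw [hu, hui] at this
    simpa [hS, σ₁T, hc] using this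
  have ht1 : t₁T (RatFunc ℚ) uX 2 le_rfl = S * T * S := by
    simp [t₁T, hS, σ₁T, hT, tT, map_mul]
  have h1 : f (t₁T (RatFunc ℚ) uX 2 le_rfl) = (c * m + 1) • f T := by
    rw [ht1, mul_assoc, hf S (T * S), mul_assoc, hsq, mul_add, mul_one, mul_smul_comm,
      map_add, map_smul, hmarkov, smul_smul, add_smul, one_smul]
  rw [h1, smul_smul] at heq
  have h3 : (1 - X ^ 4 * (c * m + 1)) • f T = 0 := by
    rw [sub_smul, one_smul, ← heq, sub_self]
  have hk : (1 - X ^ 4 * (c * m + 1)) = (1 - X ^ 6) / (1 + X ^ 2) := by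
    have h2ne : (1 + X ^ 2 : RatFunc ℚ) ≠ 0 := one_add_X_sq_ne
    rw [hc, hm]
    field_simp
    ring
  rw [hk] at h3
  have hne : (1 - X ^ 6) / (1 + X ^ 2) ≠ 0 :=
    div_ne_zero one_sub_X_six_ne one_add_X_sq_ne
  exact (smul_eq_zero.mp h3).resolve_left hne
end

section
/- Let M be a module over ℤ[A, A⁻¹], let (τ_j)_{j∈ℕ} be a sequence of elements of M, and let y_{k,m} ∈ M be defined for all natural numbers k ≥ m ≥ 0 by y_{k,0} = τ_k and, for k ≥ m ≥ 1, y_{k,m} = −A^{−2}·τ_{k+m} − A³·τ_{k+m−2} − A·y_{k−1,m−1}. Then for all k ≥ m > 0, the element y_{k,m} + A^{−2}·τ_{k+m} lies in the ℤ[A, A⁻¹]-submodule of M spanned by the elements τ_j with j ≤ k + m − 2 and j ≡ k + m (mod 2). -/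
/-- The elements `y_{k,m}` defined by `y_{k,0} = τ_k` and, for `k ≥ m ≥ 1`,
`y_{k,m} = −A⁻²·τ_{k+m} − A³·τ_{k+m−2} − A·y_{k−1,m−1}`, where `A^j` is the
Laurent monomial `LaurentPolynomial.T j` in `ℤ[A, A⁻¹]`. -/
noncomputable def yseq (M : Type*) [AddCommGroup M] [Module (LaurentPolynomial ℤ) M]
    (τ : ℕ → M) : ℕ → ℕ → M
  | k, 0 => τ k
  | k, (m + 1) =>
      -((LaurentPolynomial.T (-2) : LaurentPolynomial ℤ) • τ (k + (m + 1)))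
        - (LaurentPolynomial.T 3 : LaurentPolynomial ℤ) • τ (k + (m + 1) - 2)
        - (LaurentPolynomial.T 1 : LaurentPolynomial ℤ) • yseq M τ (k - 1) m

theorem yseq_leading_term (M : Type*) [AddCommGroup M] [Module (LaurentPolynomial ℤ) M]
    (τ : ℕ → M) (k m : ℕ) (hm : 0 < m) (hkm : m ≤ k) :
    yseq M τ k m + (LaurentPolynomial.T (-2) : LaurentPolynomial ℤ) • τ (k + m) ∈
      Submodule.span (LaurentPolynomial ℤ)
        {x : M | ∃ j : ℕ, j ≤ k + m - 2 ∧ j % 2 = (k + m) % 2 ∧ x = τ j} := by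
  induction m generalizing k with
  | zero => exact absurd hm (lt_irrefl 0)
  | succ m ih =>
    rcases Nat.eq_zero_or_pos m with hm0 | hm0
    · subst hm0
      have hk : 1 ≤ k := hkm
      have e1 : k + (0 + 1) - 2 = k - 1 := by omega
      have key : yseq M τ k 1
          + (LaurentPolynomial.T (-2) : LaurentPolynomial ℤ) • τ (k + 1)
          = (-(LaurentPolynomial.T 3) - LaurentPolynomial.T 1 : LaurentPolynomial ℤ)
              • τ (k - 1) := by
        show -((LaurentPolynomial.T (-2) : LaurentPolynomial ℤ) • τ (k + (0 + 1)))
              - (LaurentPolynomial.T 3 : LaurentPolynomial ℤ) • τ (k + (0 + 1) - 2)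
              - (LaurentPolynomial.T 1 : LaurentPolynomial ℤ) • yseq M τ (k - 1) 0
              + (LaurentPolynomial.T (-2) : LaurentPolynomial ℤ) • τ (k + 1) = _
        rw [e1]
        show _ - _ • τ (k - 1) + _ = _
        module
      rw [key]
      refine Submodule.smul_mem _ _ (Submodule.subset_span ?_)
      exact ⟨k - 1, by omega, by omega, rfl⟩
    · have hk : m + 1 ≤ k := hkm
      have h1 := ih (k - 1) hm0 (by omega)
      have e1 : k - 1 + m = k + m - 1 := by omega
      have e2 : k + (m + 1) - 2 = k + m - 1 := by omega
      have key : yseq M τ k (m + 1)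
          + (LaurentPolynomial.T (-2) : LaurentPolynomial ℤ) • τ (k + (m + 1))
          = (-(LaurentPolynomial.T 3)
              + LaurentPolynomial.T 1 * LaurentPolynomial.T (-2) : LaurentPolynomial ℤ)
              • τ (k + m - 1)
            - (LaurentPolynomial.T 1 : LaurentPolynomial ℤ) •
              (yseq M τ (k - 1) m
                + (LaurentPolynomial.T (-2) : LaurentPolynomial ℤ) • τ (k - 1 + m)) := by
        show -((LaurentPolynomial.T (-2) : LaurentPolynomial ℤ) • τ (k + (m + 1)))
              - (LaurentPolynomial.T 3 : LaurentPolynomial ℤ) • τ (k + (m + 1) - 2)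
              - (LaurentPolynomial.T 1 : LaurentPolynomial ℤ) • yseq M τ (k - 1) m
              + (LaurentPolynomial.T (-2) : LaurentPolynomial ℤ) • τ (k + (m + 1)) = _
        rw [e1, e2]
        module
      rw [key]
      refine Submodule.sub_mem _
        (Submodule.smul_mem _ _ (Submodule.subset_span ⟨k + m - 1, by omega, by omega, rfl⟩))
        (Submodule.smul_mem _ _ ?_)
      refine Submodule.span_mono ?_ h1
      rintro x ⟨j, hj1, hj2, rfl⟩
      exact ⟨j, by omega, by omega, rfl⟩
end
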